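/- Let d ∈ {2,3}. There exists a constant C > 0 (depending only on d and the ambient dimension n) such that for every bounded, twice continuously differentiable function u : ℝⁿ → ℂ with bounded first and second derivatives, and all coordinate directions i, j: ‖∂_i∂_j(|u|^{4/d} u)‖_{L²(ℝⁿ)} ≤ C ( ‖∂_i∂_j u‖_{L²(ℝⁿ)} ‖u‖_{L^∞}^{4/d} + ‖∂_i u‖_{L⁴(ℝⁿ)} ‖∂_j u‖_{L⁴(ℝⁿ)} ‖u‖_{L^∞}^{4/d − 1} ), where the norms are allowed to be +∞. -/

import Mathlib

set_option maxHeartbeats 1000000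
set_option synthInstance.maxHeartbeats 400000
open ContinuousLinearMap Filter Topology Asymptotics

noncomputable def innerR : ℂ →L[ℝ] ℂ →L[ℝ] ℝ := innerSL ℝ

lemma norm_innerR_le : ‖innerR‖ ≤ 1 := by
  refine opNorm_le_bound _ zero_le_one fun w => ?_
  rw [one_mul]
  exact le_of_eq (innerSL_apply_norm ℝ w)

lemma hasFDerivAt_norm_rpow_ne {z : ℂ} (hz : z ≠ 0) (q : ℝ) :
    HasFDerivAt (fun x : ℂ => ‖x‖ ^ q) ((q * ‖z‖ ^ (q - 2)) • innerSL ℝ z) z := by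
  apply HasStrictFDerivAt.hasFDerivAt
  convert (hasStrictFDerivAt_norm_sq z).rpow_const (p := q / 2) (by simp [hz]) using 0
  simp_rw [← Real.rpow_natCast_mul (norm_nonneg _), ← Nat.cast_smul_eq_nsmul ℝ, smul_smul]
  ring_nf

lemma norm_rpow_mul_norm {z : ℂ} (hz : z ≠ 0) (a : ℝ) : ‖z‖ ^ (a - 1) * ‖z‖ = ‖z‖ ^ a := by
  rw [← Real.rpow_add_one (norm_ne_zero_iff.2 hz), sub_add_cancel]

noncomputable def Gmap (p : ℝ) (z : ℂ) : ℂ →L[ℝ] ℂ :=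
  ‖z‖ ^ p • ContinuousLinearMap.id ℝ ℂ + ((p * ‖z‖ ^ (p - 2)) • innerSL ℝ z).smulRight z

variable {p : ℝ}

lemma Gmap_zero (hp : 1 < p) : Gmap p 0 = 0 := by
  ext w
  simp [Gmap, Real.zero_rpow (ne_of_gt (by linarith : (0:ℝ) < p))]

lemma hasFDerivAt_F (hp : 1 < p) (z : ℂ) :
    HasFDerivAt (fun w : ℂ => ‖w‖ ^ p • w) (Gmap p z) z := by
  exact (hasFDerivAt_norm_rpow z hp).smul (hasFDerivAt_id z)

lemma norm_Gmap_le (hp : 1 < p) (z : ℂ) : ‖Gmap p z‖ ≤ (1 + p) * ‖z‖ ^ p := by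
  rcases eq_or_ne z 0 with rfl | hz
  · rw [Gmap_zero hp]
    simp [Real.zero_rpow (ne_of_gt (by linarith : (0:ℝ) < p))]
  have h0 : (0:ℝ) < ‖z‖ := norm_pos_iff.2 hz
  refine (norm_add_le _ _).trans ?_
  have h1 : ‖‖z‖ ^ p • ContinuousLinearMap.id ℝ ℂ‖ ≤ ‖z‖ ^ p := by
    refine (ContinuousLinearMap.opNorm_smul_le _ _).trans ?_
    rw [Real.norm_of_nonneg (Real.rpow_nonneg (norm_nonneg z) p)]
    calc ‖z‖ ^ p * ‖ContinuousLinearMap.id ℝ ℂ‖ ≤ ‖z‖ ^ p * 1 :=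
          mul_le_mul_of_nonneg_left norm_id_le (by positivity)
      _ = ‖z‖ ^ p := mul_one _
  have h2 : ‖((p * ‖z‖ ^ (p - 2)) • innerSL ℝ z).smulRight z‖ ≤ p * ‖z‖ ^ p := by
    rw [norm_smulRight_apply, norm_smul, innerSL_apply_norm]
    rw [Real.norm_of_nonneg (by positivity : (0:ℝ) ≤ p * ‖z‖ ^ (p - 2))]
    have key : ‖z‖ ^ (p - 2) * ‖z‖ * ‖z‖ = ‖z‖ ^ p := by
      rw [show p - 2 = (p-1) - 1 by ring, norm_rpow_mul_norm hz (p-1), norm_rpow_mul_norm hz p]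
    calc p * ‖z‖ ^ (p - 2) * ‖z‖ * ‖z‖ = p * (‖z‖ ^ (p - 2) * ‖z‖ * ‖z‖) := by ring
      _ = p * ‖z‖ ^ p := by rw [key]
      _ ≤ p * ‖z‖ ^ p := le_rfl
  linarith [h1, h2]

lemma exists_hasFDerivAt_Gmap (hp : 1 < p) (z : ℂ) :
    ∃ Φ : ℂ →L[ℝ] ℂ →L[ℝ] ℂ, HasFDerivAt (Gmap p) Φ z ∧
      ‖Φ‖ ≤ (3 * p + p * |p - 2|) * ‖z‖ ^ (p - 1) := by
  have hp1 : (0:ℝ) < p - 1 := by linarith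
  rcases eq_or_ne z 0 with rfl | hz
  · refine ⟨0, ?_, ?_⟩
    · have hb : ∀ w : ℂ, ‖Gmap p w‖ ≤ (1 + p) * ‖w‖ ^ (p - 1) * ‖w‖ := by
        intro w
        rcases eq_or_ne w 0 with rfl | hw
        · rw [Gmap_zero hp]; simp
        · rw [mul_assoc, norm_rpow_mul_norm hw p]
          exact norm_Gmap_le hp w
      rw [hasFDerivAt_iff_isLittleO]
      refine Asymptotics.isLittleO_iff.2 fun c hc => ?_
      have ht : Tendsto (fun w : ℂ => (1 + p) * ‖w‖ ^ (p - 1)) (𝓝 0) (𝓝 0) := by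
        have h1 : Tendsto (fun w : ℂ => ‖w‖ ^ (p - 1)) (𝓝 0) (𝓝 (‖(0:ℂ)‖ ^ (p - 1))) :=
          (continuous_norm.tendsto (0:ℂ)).rpow_const (Or.inr hp1.le)
        rw [norm_zero, Real.zero_rpow hp1.ne'] at h1
        simpa using h1.const_mul (1 + p)
      filter_upwards [ht.eventually_lt_const hc] with w hw
      have := hb w
      simp only [Gmap_zero hp, sub_zero, map_zero, ContinuousLinearMap.zero_apply, sub_zero]
      calc ‖Gmap p w‖ ≤ (1 + p) * ‖w‖ ^ (p - 1) * ‖w‖ := hb w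
        _ ≤ c * ‖w‖ := mul_le_mul_of_nonneg_right hw.le (norm_nonneg w)
    · have : ‖(0 : ℂ →L[ℝ] ℂ →L[ℝ] ℂ)‖ = 0 := opNorm_zero
      rw [this]
      positivity
  · have hz0 : (0:ℝ) < ‖z‖ := norm_pos_iff.2 hz
    -- derivative of first summand
    have hA : HasFDerivAt (fun w : ℂ => ‖w‖ ^ p • ContinuousLinearMap.id ℝ ℂ)
        (((p * ‖z‖ ^ (p - 2)) • innerSL ℝ z).smulRight (ContinuousLinearMap.id ℝ ℂ)) z := by
      have h := (hasFDerivAt_norm_rpow z hp).smul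
        (hasFDerivAt_const (ContinuousLinearMap.id ℝ ℂ) z)
      simp only [smul_zero, zero_add] at h
      exact h
    -- derivative of the scalar coefficient
    have hm : HasFDerivAt (fun w : ℂ => p * ‖w‖ ^ (p - 2))
        (p • (((p - 2) * ‖z‖ ^ (p - 2 - 2)) • innerSL ℝ z)) z :=
      (hasFDerivAt_norm_rpow_ne hz (p - 2)).const_mul p
    -- derivative of γ
    have hγ : HasFDerivAt (fun w : ℂ => (p * ‖w‖ ^ (p - 2)) • (innerSL ℝ w : ℂ →L[ℝ] ℝ))
        ((p * ‖z‖ ^ (p - 2)) • innerR +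
          (p • (((p - 2) * ‖z‖ ^ (p - 2 - 2)) • innerSL ℝ z)).smulRight (innerSL ℝ z)) z :=
      hm.smul innerR.hasFDerivAt
    set γ' : ℂ →L[ℝ] ℂ →L[ℝ] ℝ := (p * ‖z‖ ^ (p - 2)) • innerR +
          (p • (((p - 2) * ‖z‖ ^ (p - 2 - 2)) • innerSL ℝ z)).smulRight (innerSL ℝ z) with hγ'def
    have hc : HasFDerivAt
        (fun w : ℂ => smulRightL ℝ ℂ ℂ ((p * ‖w‖ ^ (p - 2)) • innerSL ℝ w))
        ((smulRightL ℝ ℂ ℂ).comp γ') z :=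
      (smulRightL ℝ ℂ ℂ).hasFDerivAt.comp z hγ
    have hB : HasFDerivAt (fun w : ℂ => ((p * ‖w‖ ^ (p - 2)) • innerSL ℝ w).smulRight w)
        ((smulRightL ℝ ℂ ℂ ((p * ‖z‖ ^ (p - 2)) • innerSL ℝ z)).comp
            (ContinuousLinearMap.id ℝ ℂ) +
          ((smulRightL ℝ ℂ ℂ).comp γ').flip z) z := by
      exact hc.clm_apply (hasFDerivAt_id z)
    have hp0 : (0:ℝ) ≤ p := by linarith
    have hrp : (0:ℝ) ≤ ‖z‖ ^ (p-2) := Real.rpow_nonneg (norm_nonneg z) _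
    have hrp4 : (0:ℝ) ≤ ‖z‖ ^ (p-2-2) := Real.rpow_nonneg (norm_nonneg z) _
    have hrp1 : (0:ℝ) ≤ ‖z‖ ^ (p-1) := Real.rpow_nonneg (norm_nonneg z) _
    have e1 : ‖z‖ ^ (p-2) * ‖z‖ = ‖z‖ ^ (p-1) := by
      rw [show p - 2 = (p-1) - 1 by ring, norm_rpow_mul_norm hz]
    have e2 : ‖z‖ ^ (p-2-2) * ‖z‖ * ‖z‖ = ‖z‖ ^ (p-2) := by
      rw [show p - 2 - 2 = ((p-2) - 1) - 1 by ring, norm_rpow_mul_norm hz, norm_rpow_mul_norm hz]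
    have hcoef : ‖(p * ‖z‖ ^ (p - 2)) • (innerSL ℝ z : ℂ →L[ℝ] ℝ)‖ ≤ p * ‖z‖ ^ (p-2) * ‖z‖ := by
      refine (ContinuousLinearMap.opNorm_smul_le _ _).trans ?_
      rw [innerSL_apply_norm, Real.norm_of_nonneg (mul_nonneg hp0 hrp)]
    have hS1 : ‖((p * ‖z‖ ^ (p - 2)) • innerSL ℝ z).smulRight (ContinuousLinearMap.id ℝ ℂ)‖
        ≤ p * ‖z‖ ^ (p - 1) := by
      rw [norm_smulRight_apply]
      calc ‖(p * ‖z‖ ^ (p - 2)) • (innerSL ℝ z : ℂ →L[ℝ] ℝ)‖ * ‖ContinuousLinearMap.id ℝ ℂ‖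
          ≤ (p * ‖z‖ ^ (p-2) * ‖z‖) * 1 :=
            mul_le_mul hcoef norm_id_le (norm_nonneg _)
              (mul_nonneg (mul_nonneg hp0 hrp) (norm_nonneg z))
        _ = p * ‖z‖ ^ (p-1) := by rw [mul_one, mul_assoc, e1]
    have hS2 : ‖(smulRightL ℝ ℂ ℂ ((p * ‖z‖ ^ (p - 2)) • innerSL ℝ z)).comp
        (ContinuousLinearMap.id ℝ ℂ)‖ ≤ p * ‖z‖ ^ (p - 1) := by
      refine (opNorm_comp_le _ _).trans ?_
      rw [norm_smulRightL]
      calc ‖(p * ‖z‖ ^ (p - 2)) • (innerSL ℝ z : ℂ →L[ℝ] ℝ)‖ * ‖ContinuousLinearMap.id ℝ ℂ‖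
          ≤ (p * ‖z‖ ^ (p-2) * ‖z‖) * 1 :=
            mul_le_mul hcoef norm_id_le (norm_nonneg _)
              (mul_nonneg (mul_nonneg hp0 hrp) (norm_nonneg z))
        _ = p * ‖z‖ ^ (p-1) := by rw [mul_one, mul_assoc, e1]
    have hγ'n : ‖γ'‖ ≤ (p + p * |p-2|) * ‖z‖ ^ (p-2) := by
      rw [hγ'def]
      refine (ContinuousLinearMap.opNorm_add_le _ _).trans ?_
      have t1 : ‖(p * ‖z‖ ^ (p - 2)) • innerR‖ ≤ p * ‖z‖ ^ (p-2) := by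
        refine (ContinuousLinearMap.opNorm_smul_le _ _).trans ?_
        rw [Real.norm_of_nonneg (mul_nonneg hp0 hrp)]
        calc p * ‖z‖ ^ (p-2) * ‖innerR‖ ≤ p * ‖z‖ ^ (p-2) * 1 :=
              mul_le_mul_of_nonneg_left norm_innerR_le (mul_nonneg hp0 hrp)
          _ = p * ‖z‖ ^ (p-2) := mul_one _
      have t2 : ‖(p • (((p - 2) * ‖z‖ ^ (p - 2 - 2)) • innerSL ℝ z)).smulRight (innerSL ℝ z)‖
          ≤ p * |p-2| * ‖z‖ ^ (p-2) := by
        rw [norm_smulRight_apply, innerSL_apply_norm]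
        have hn : ‖p • (((p - 2) * ‖z‖ ^ (p - 2 - 2)) • (innerSL ℝ z : ℂ →L[ℝ] ℝ))‖
            ≤ p * (|p-2| * ‖z‖ ^ (p-2-2) * ‖z‖) := by
          refine (ContinuousLinearMap.opNorm_smul_le _ _).trans ?_
          rw [Real.norm_of_nonneg hp0]
          refine mul_le_mul_of_nonneg_left ?_ hp0
          refine (ContinuousLinearMap.opNorm_smul_le _ _).trans ?_
          rw [innerSL_apply_norm, Real.norm_eq_abs, abs_mul, abs_of_nonneg hrp4]
        calc ‖p • (((p - 2) * ‖z‖ ^ (p - 2 - 2)) • (innerSL ℝ z : ℂ →L[ℝ] ℝ))‖ * ‖z‖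
            ≤ (p * (|p-2| * ‖z‖ ^ (p-2-2) * ‖z‖)) * ‖z‖ :=
              mul_le_mul_of_nonneg_right hn (norm_nonneg z)
          _ = p * |p-2| * (‖z‖ ^ (p-2-2) * ‖z‖ * ‖z‖) := by ring
          _ = p * |p-2| * ‖z‖ ^ (p-2) := by rw [e2]
      calc ‖(p * ‖z‖ ^ (p - 2)) • innerR‖ +
            ‖(p • (((p - 2) * ‖z‖ ^ (p - 2 - 2)) • innerSL ℝ z)).smulRight (innerSL ℝ z)‖
          ≤ p * ‖z‖ ^ (p-2) + p * |p-2| * ‖z‖ ^ (p-2) := add_le_add t1 t2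
        _ = (p + p * |p-2|) * ‖z‖ ^ (p-2) := by ring
    have hS3 : ‖((smulRightL ℝ ℂ ℂ).comp γ').flip z‖ ≤ (p + p * |p-2|) * ‖z‖ ^ (p-1) := by
      have hT : ‖(smulRightL ℝ ℂ ℂ).comp γ'‖ ≤ (p + p * |p-2|) * ‖z‖ ^ (p-2) := by
        calc ‖(smulRightL ℝ ℂ ℂ).comp γ'‖ ≤ ‖smulRightL ℝ ℂ ℂ‖ * ‖γ'‖ := opNorm_comp_le _ _
          _ ≤ 1 * ‖γ'‖ := mul_le_mul_of_nonneg_right norm_smulRightL_le (ContinuousLinearMap.opNorm_nonneg _)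
          _ = ‖γ'‖ := one_mul _
          _ ≤ (p + p * |p-2|) * ‖z‖ ^ (p-2) := hγ'n
      calc ‖((smulRightL ℝ ℂ ℂ).comp γ').flip z‖
          ≤ ‖((smulRightL ℝ ℂ ℂ).comp γ').flip‖ * ‖z‖ := le_opNorm _ _
        _ = ‖(smulRightL ℝ ℂ ℂ).comp γ'‖ * ‖z‖ := by rw [opNorm_flip]
        _ ≤ ((p + p * |p-2|) * ‖z‖ ^ (p-2)) * ‖z‖ :=
            mul_le_mul_of_nonneg_right hT (norm_nonneg z)
        _ = (p + p * |p-2|) * ‖z‖ ^ (p-1) := by rw [mul_assoc, e1]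
    refine ⟨_, (hA.add hB : HasFDerivAt (Gmap p) _ z), ?_⟩
    refine (ContinuousLinearMap.opNorm_add_le _ _).trans ?_
    refine le_trans (add_le_add hS1 ((ContinuousLinearMap.opNorm_add_le _ _).trans (add_le_add hS2 hS3))) ?_
    nlinarith [hrp1, abs_nonneg (p-2)]


open MeasureTheory
open scoped ENNReal NNReal
/-- Second-derivative estimate underlying part (iii) of the nonlinear estimates lemma: for
`d ∈ {2,3}` there is `C > 0` (depending only on `d` and `n`) such that for every bounded `C²`
function `u : ℝⁿ → ℂ` with bounded first and second derivatives and all coordinate directions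
`i, j`,
`‖∂ᵢ∂ⱼ(|u|^{4/d}u)‖_{L²} ≤ C ( ‖∂ᵢ∂ⱼu‖_{L²} ‖u‖_∞^{4/d}
  + ‖∂ᵢu‖_{L⁴} ‖∂ⱼu‖_{L⁴} ‖u‖_∞^{4/d−1} )`. -/
theorem critical_nonlinearity_second_derivative_estimate (d n : ℕ) (hd : d = 2 ∨ d = 3) :
    ∃ C : ℝ, 0 < C ∧ ∀ u : EuclideanSpace ℝ (Fin n) → ℂ,
      ContDiff ℝ 2 u →
      (∃ M : ℝ, ∀ x, ‖u x‖ ≤ M ∧ ‖fderiv ℝ u x‖ ≤ M ∧ ‖fderiv ℝ (fderiv ℝ u) x‖ ≤ M) →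
      ∀ i j : Fin n,
      eLpNorm (fun x =>
          fderiv ℝ (fun y =>
              fderiv ℝ (fun z => ((‖u z‖ ^ ((4 : ℝ) / d) : ℝ) : ℂ) * u z) y
                (EuclideanSpace.single j 1)) x (EuclideanSpace.single i 1)) 2 volume
        ≤ ENNReal.ofReal C *
          (eLpNorm (fun x =>
              fderiv ℝ (fun y => fderiv ℝ u y (EuclideanSpace.single j 1)) x
                (EuclideanSpace.single i 1)) 2 volume
              * (eLpNorm u ⊤ volume) ^ ((4 : ℝ) / d)
            + eLpNorm (fun x => fderiv ℝ u x (EuclideanSpace.single i 1)) 4 volume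
              * eLpNorm (fun x => fderiv ℝ u x (EuclideanSpace.single j 1)) 4 volume
              * (eLpNorm u ⊤ volume) ^ ((4 : ℝ) / d - 1)) := by
  have hp : 1 < (4 : ℝ) / d := by rcases hd with rfl | rfl <;> norm_num
  set p : ℝ := 4 / d with hpdef
  set Cp : ℝ := 3 * p + p * |p - 2| with hCpdef
  have hp0 : (0:ℝ) ≤ p := by linarith
  have hCp0 : (0:ℝ) ≤ Cp := by
    have := abs_nonneg (p - 2); nlinarith
  set C : ℝ := max (1 + p) Cp + 1 with hCdef
  have hC1p : 1 + p ≤ C := by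
    have := le_max_left (1 + p) Cp; linarith
  have hCCp : Cp ≤ C := by
    have := le_max_right (1 + p) Cp; linarith
  have hCpos : 0 < C := by linarith
  refine ⟨C, hCpos, ?_⟩
  intro u hu hbd i j
  obtain ⟨M, hM⟩ := hbd
  set ei : EuclideanSpace ℝ (Fin n) := EuclideanSpace.single i 1 with heidef
  set ej : EuclideanSpace ℝ (Fin n) := EuclideanSpace.single j 1 with hejdef
  have hud : Differentiable ℝ u := hu.differentiable two_ne_zero
  have hfd : ContDiff ℝ 1 (fderiv ℝ u) := hu.fderiv_right (by norm_num)
  set w : EuclideanSpace ℝ (Fin n) → ℂ := fun y => fderiv ℝ u y ej with hwdef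
  set vi : EuclideanSpace ℝ (Fin n) → ℂ := fun y => fderiv ℝ u y ei with hvidef
  have hw : ContDiff ℝ 1 w := hfd.clm_apply contDiff_const
  have hvi : ContDiff ℝ 1 vi := hfd.clm_apply contDiff_const
  have hwd : Differentiable ℝ w := hw.differentiable one_ne_zero
  set gij : EuclideanSpace ℝ (Fin n) → ℂ := fun x => fderiv ℝ w x ei with hgdef
  have hgc : Continuous gij := ((contDiff_one_iff_fderiv.mp hw).2).clm_apply continuous_const
  -- rewrite the nonlinearity
  have hFfun : (fun z => ((‖u z‖ ^ p : ℝ) : ℂ) * u z)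
      = fun z => ‖u z‖ ^ p • u z := by
    funext z
    rw [Complex.real_smul]
  have hFu : ∀ y, HasFDerivAt (fun z => ‖u z‖ ^ p • u z)
      ((Gmap p (u y)).comp (fderiv ℝ u y)) y :=
    fun y => (hasFDerivAt_F hp (u y)).comp y (hud y).hasFDerivAt
  have hinner : (fun y => fderiv ℝ (fun z => ‖u z‖ ^ p • u z) y ej)
      = fun y => Gmap p (u y) (w y) := by
    funext y
    rw [(hFu y).fderiv]
    rfl
  rw [hFfun, hinner]
  set φ : EuclideanSpace ℝ (Fin n) → ℝ := fun x => (1 + p) * ‖u x‖ ^ p * ‖gij x‖ with hφdef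
  set ψ : EuclideanSpace ℝ (Fin n) → ℝ := fun x => Cp * ‖u x‖ ^ (p - 1) * (‖vi x‖ * ‖w x‖)
    with hψdef
  have hφ0 : ∀ x, 0 ≤ φ x := fun x =>
    mul_nonneg (mul_nonneg (by linarith) (Real.rpow_nonneg (norm_nonneg _) _)) (norm_nonneg _)
  have hψ0 : ∀ x, 0 ≤ ψ x := fun x =>
    mul_nonneg (mul_nonneg hCp0 (Real.rpow_nonneg (norm_nonneg _) _))
      (mul_nonneg (norm_nonneg _) (norm_nonneg _))
  have key : ∀ x, ‖fderiv ℝ (fun y => Gmap p (u y) (w y)) x ei‖ ≤ φ x + ψ x := by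
    intro x
    obtain ⟨Φ, hΦ, hΦn⟩ := exists_hasFDerivAt_Gmap hp (u x)
    have hGu : HasFDerivAt (fun y => Gmap p (u y)) (Φ.comp (fderiv ℝ u x)) x :=
      hΦ.comp x (hud x).hasFDerivAt
    have hD : HasFDerivAt (fun y => Gmap p (u y) (w y))
        ((Gmap p (u x)).comp (fderiv ℝ w x) + (Φ.comp (fderiv ℝ u x)).flip (w x)) x :=
      hGu.clm_apply (hwd x).hasFDerivAt
    rw [hD.fderiv]
    simp only [ContinuousLinearMap.add_apply, ContinuousLinearMap.comp_apply,
      ContinuousLinearMap.flip_apply]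
    refine (norm_add_le _ _).trans (add_le_add ?_ ?_)
    · calc ‖Gmap p (u x) (fderiv ℝ w x ei)‖ ≤ ‖Gmap p (u x)‖ * ‖gij x‖ :=
            ContinuousLinearMap.le_opNorm _ _
        _ ≤ (1 + p) * ‖u x‖ ^ p * ‖gij x‖ :=
            mul_le_mul_of_nonneg_right (norm_Gmap_le hp (u x)) (norm_nonneg _)
    · calc ‖Φ (fderiv ℝ u x ei) (w x)‖ ≤ ‖Φ‖ * ‖vi x‖ * ‖w x‖ :=
            ContinuousLinearMap.le_opNorm₂ Φ _ _
        _ ≤ Cp * ‖u x‖ ^ (p - 1) * ‖vi x‖ * ‖w x‖ := by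
            refine mul_le_mul_of_nonneg_right
              (mul_le_mul_of_nonneg_right hΦn (norm_nonneg _)) (norm_nonneg _)
        _ = Cp * ‖u x‖ ^ (p - 1) * (‖vi x‖ * ‖w x‖) := by ring
  have hφc : Continuous φ :=
    (continuous_const.mul ((hu.continuous.norm).rpow_const fun x => Or.inr hp0)).mul hgc.norm
  have hψc : Continuous ψ :=
    (continuous_const.mul ((hu.continuous.norm).rpow_const fun x => Or.inr (by linarith))).mul
      ((hvi.continuous.norm).mul (hw.continuous.norm))
  have stepA : eLpNorm (fun x => fderiv ℝ (fun y => Gmap p (u y) (w y)) x ei) 2 volume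
      ≤ eLpNorm φ 2 volume + eLpNorm ψ 2 volume := by
    refine (eLpNorm_mono fun x => ?_).trans
      (eLpNorm_add_le (f := φ) (g := ψ) hφc.aestronglyMeasurable hψc.aestronglyMeasurable one_le_two)
    show ‖fderiv ℝ (fun y => Gmap p (u y) (w y)) x ei‖ ≤ ‖(φ + ψ) x‖
    rw [Pi.add_apply, Real.norm_of_nonneg (add_nonneg (hφ0 x) (hψ0 x))]
    exact key x
  set N : ℝ≥0∞ := eLpNorm u ⊤ volume with hNdef
  have hNtop : N ≠ ⊤ := by
    rw [hNdef, eLpNorm_exponent_top]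
    exact ((eLpNormEssSup_le_of_ae_bound (C := M)
      (Filter.Eventually.of_forall fun x => (hM x).1)).trans_lt ENNReal.ofReal_lt_top).ne
  set K : ℝ := N.toReal with hKdef
  have hK0 : 0 ≤ K := ENNReal.toReal_nonneg
  have hKae : ∀ᵐ x ∂(volume : Measure (EuclideanSpace ℝ (Fin n))), ‖u x‖ ≤ K := by
    filter_upwards [enorm_ae_le_eLpNormEssSup u volume] with x hx
    calc ‖u x‖ = ((‖u x‖₊ : ℝ≥0∞)).toReal := by simp
      _ ≤ N.toReal := ENNReal.toReal_mono hNtop (by rwa [hNdef, eLpNorm_exponent_top])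
  have hNp : ENNReal.ofReal (K ^ p) = N ^ p := by
    rw [hKdef, ENNReal.toReal_rpow,
      ENNReal.ofReal_toReal (ENNReal.rpow_ne_top_of_nonneg hp0 hNtop)]
  have hNp1 : ENNReal.ofReal (K ^ (p - 1)) = N ^ (p - 1) := by
    rw [hKdef, ENNReal.toReal_rpow,
      ENNReal.ofReal_toReal (ENNReal.rpow_ne_top_of_nonneg (by linarith) hNtop)]
  have c0 : (0:ℝ) ≤ (1 + p) * K ^ p :=
    mul_nonneg (by linarith) (Real.rpow_nonneg hK0 _)
  have c0' : (0:ℝ) ≤ Cp * K ^ (p - 1) :=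
    mul_nonneg hCp0 (Real.rpow_nonneg hK0 _)
  have hA : eLpNorm φ 2 volume
      ≤ ENNReal.ofReal ((1 + p) * K ^ p) * eLpNorm gij 2 volume := by
    have hmono : eLpNorm φ 2 volume
        ≤ eLpNorm (((1 + p) * K ^ p) • (fun x => ‖gij x‖)) 2 volume := by
      refine eLpNorm_mono_ae ?_
      filter_upwards [hKae] with x hx
      rw [Real.norm_of_nonneg (hφ0 x), Pi.smul_apply, smul_eq_mul,
        Real.norm_of_nonneg (mul_nonneg c0 (norm_nonneg _))]
      have hup : ‖u x‖ ^ p ≤ K ^ p := Real.rpow_le_rpow (norm_nonneg _) hx hp0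
      calc (1 + p) * ‖u x‖ ^ p * ‖gij x‖ ≤ (1 + p) * K ^ p * ‖gij x‖ :=
            mul_le_mul_of_nonneg_right (mul_le_mul_of_nonneg_left hup (by linarith))
              (norm_nonneg _)
        _ = (1 + p) * K ^ p * ‖gij x‖ := rfl
    refine hmono.trans ?_
    rw [eLpNorm_const_smul, eLpNorm_norm, Real.enorm_eq_ofReal c0]
  have hB : eLpNorm ψ 2 volume
      ≤ ENNReal.ofReal (Cp * K ^ (p - 1)) * (eLpNorm vi 4 volume * eLpNorm w 4 volume) := by
    have hmono : eLpNorm ψ 2 volume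
        ≤ eLpNorm ((Cp * K ^ (p - 1)) • (fun x => ‖vi x‖ * ‖w x‖)) 2 volume := by
      refine eLpNorm_mono_ae ?_
      filter_upwards [hKae] with x hx
      rw [Real.norm_of_nonneg (hψ0 x), Pi.smul_apply, smul_eq_mul,
        Real.norm_of_nonneg (mul_nonneg c0' (mul_nonneg (norm_nonneg _) (norm_nonneg _)))]
      have hup : ‖u x‖ ^ (p - 1) ≤ K ^ (p - 1) :=
        Real.rpow_le_rpow (norm_nonneg _) hx (by linarith)
      exact mul_le_mul_of_nonneg_right (mul_le_mul_of_nonneg_left hup hCp0)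
        (mul_nonneg (norm_nonneg _) (norm_nonneg _))
    refine hmono.trans ?_
    rw [eLpNorm_const_smul, Real.enorm_eq_ofReal c0']
    refine mul_le_mul_right ?_ _
    have hH : ENNReal.HolderTriple 4 4 2 := ⟨by
      rw [show (4:ℝ≥0∞) = 2 * 2 by norm_num,
        ENNReal.mul_inv (by norm_num) (by norm_num), ← two_mul, ← mul_assoc,
        ENNReal.mul_inv_cancel (by norm_num) (by norm_num), one_mul]⟩
    have hb := eLpNorm_le_eLpNorm_mul_eLpNorm'_of_norm (p := 4) (q := 4) (r := 2)
      (μ := volume)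
      hvi.continuous.aestronglyMeasurable
      hw.continuous.aestronglyMeasurable (fun a b => ‖a‖ * ‖b‖) 1
      (Filter.Eventually.of_forall fun x => by
        rw [Real.norm_of_nonneg (mul_nonneg (norm_nonneg _) (norm_nonneg _))]
        simp)
    rwa [ENNReal.coe_one, one_mul] at hb
  have h1 : ENNReal.ofReal ((1 + p) * K ^ p) * eLpNorm gij 2 volume
      ≤ ENNReal.ofReal C * (eLpNorm gij 2 volume * N ^ p) := by
    rw [ENNReal.ofReal_mul (by linarith), hNp]
    calc ENNReal.ofReal (1 + p) * N ^ p * eLpNorm gij 2 volume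
        = ENNReal.ofReal (1 + p) * (eLpNorm gij 2 volume * N ^ p) := by ring
      _ ≤ ENNReal.ofReal C * (eLpNorm gij 2 volume * N ^ p) :=
          mul_le_mul_left (ENNReal.ofReal_le_ofReal hC1p) _
  have h2 : ENNReal.ofReal (Cp * K ^ (p - 1)) * (eLpNorm vi 4 volume * eLpNorm w 4 volume)
      ≤ ENNReal.ofReal C * (eLpNorm vi 4 volume * eLpNorm w 4 volume * N ^ (p - 1)) := by
    rw [ENNReal.ofReal_mul hCp0, hNp1]
    calc ENNReal.ofReal Cp * N ^ (p - 1) * (eLpNorm vi 4 volume * eLpNorm w 4 volume)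
        = ENNReal.ofReal Cp * (eLpNorm vi 4 volume * eLpNorm w 4 volume * N ^ (p - 1)) := by
          ring
      _ ≤ ENNReal.ofReal C * (eLpNorm vi 4 volume * eLpNorm w 4 volume * N ^ (p - 1)) :=
          mul_le_mul_left (ENNReal.ofReal_le_ofReal hCCp) _
  calc eLpNorm (fun x => fderiv ℝ (fun y => Gmap p (u y) (w y)) x ei) 2 volume
      ≤ eLpNorm φ 2 volume + eLpNorm ψ 2 volume := stepA
    _ ≤ ENNReal.ofReal ((1 + p) * K ^ p) * eLpNorm gij 2 volume
        + ENNReal.ofReal (Cp * K ^ (p - 1)) * (eLpNorm vi 4 volume * eLpNorm w 4 volume) :=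
        add_le_add hA hB
    _ ≤ ENNReal.ofReal C * (eLpNorm gij 2 volume * N ^ p)
        + ENNReal.ofReal C * (eLpNorm vi 4 volume * eLpNorm w 4 volume * N ^ (p - 1)) :=
        add_le_add h1 h2
    _ = ENNReal.ofReal C * (eLpNorm gij 2 volume * N ^ p
        + eLpNorm vi 4 volume * eLpNorm w 4 volume * N ^ (p - 1)) := (mul_add _ _ _).symm
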